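/- arXiv:2601.17092 — 4 statements merged into one kernel-verified Lean document; each statement's English description precedes it below -/
import Mathlib

section
/- For every natural number n ≥ 0, the sum ∑_{k=0}^{n} C(n,k) · 4^k · (-1)^k · (k!)² / (2k+1)! equals 1/(2n+1). -/
open intervalIntegral

-- Beta integral with natural exponents
lemma beta_nat (b a : ℕ) :
    ∫ x in (0:ℝ)..1, x ^ a * (1 - x) ^ b
      = (a.factorial * b.factorial : ℝ) / ((a + b + 1).factorial) := by
  induction b generalizing a with
  | zero =>
    simp [integral_pow, Nat.factorial_succ]
    rw [eq_div_iff (by positivity)]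
    field_simp
  | succ b ih =>
    have key : (a + 1 : ℝ) * ∫ x in (0:ℝ)..1, x ^ a * (1 - x) ^ (b + 1)
        = (b + 1 : ℝ) * ∫ x in (0:ℝ)..1, x ^ (a + 1) * (1 - x) ^ b := by
      have hderiv : ∀ x ∈ Set.uIcc (0:ℝ) 1, HasDerivAt
          (fun x : ℝ => x ^ (a + 1) * (1 - x) ^ (b + 1))
          ((a + 1 : ℝ) * x ^ a * (1 - x) ^ (b + 1)
            - (b + 1 : ℝ) * (x ^ (a + 1) * (1 - x) ^ b)) x := by
        intro x _
        have h1 : HasDerivAt (fun x : ℝ => x ^ (a + 1)) ((a + 1 : ℝ) * x ^ a) x := by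
          simpa using hasDerivAt_pow (a + 1) x
        have h2 : HasDerivAt (fun x : ℝ => (1 - x) ^ (b + 1))
            (-( (b + 1 : ℝ) * (1 - x) ^ b)) x := by
          have := ((hasDerivAt_pow (b + 1) (1 - x)).comp x
            ((hasDerivAt_const x (1:ℝ)).sub (hasDerivAt_id x)))
          simpa [Function.comp_def] using this
        have : HasDerivAt (fun x : ℝ => x ^ (a + 1) * (1 - x) ^ (b + 1)) _ x := h1.mul h2
        convert this using 1
        ring
      have hint : IntervalIntegrable
          (fun x : ℝ => (a + 1 : ℝ) * x ^ a * (1 - x) ^ (b + 1)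
            - (b + 1 : ℝ) * (x ^ (a + 1) * (1 - x) ^ b)) MeasureTheory.volume 0 1 := by
        apply Continuous.intervalIntegrable
        continuity
      have h0 := integral_eq_sub_of_hasDerivAt hderiv hint
      simp at h0
      rw [intervalIntegral.integral_sub] at h0
      · rw [intervalIntegral.integral_const_mul] at h0
        rw [show (fun x : ℝ => (a + 1 : ℝ) * x ^ a * (1 - x) ^ (b + 1))
            = (fun x : ℝ => (a + 1 : ℝ) * (x ^ a * (1 - x) ^ (b + 1))) by funext x; ring] at h0
        rw [intervalIntegral.integral_const_mul] at h0
        linarith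
      · apply Continuous.intervalIntegrable; continuity
      · apply Continuous.intervalIntegrable; continuity
    have ha : (a + 1 : ℝ) ≠ 0 := by positivity
    have := ih (a + 1)
    have goal : ∫ x in (0:ℝ)..1, x ^ a * (1 - x) ^ (b + 1)
        = (b + 1 : ℝ) / (a + 1) * ((a+1).factorial * b.factorial / ((a + 1 + b + 1).factorial)) := by
      rw [← this]; field_simp at key ⊢; linarith
    rw [goal]
    rw [Nat.factorial_succ a, Nat.factorial_succ b]
    have h2 : (a + (b + 1) + 1) = (a + 1 + b + 1) := by omega
    rw [h2]
    push_cast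
    field_simp


theorem stmt_0 (n : ℕ) :
    ∑ k ∈ Finset.range (n + 1),
      (n.choose k : ℚ) * 4 ^ k * (-1) ^ k * (k.factorial : ℚ) ^ 2 / ((2 * k + 1).factorial : ℚ)
    = (1 : ℚ) / (2 * (n : ℚ) + 1) := by
  have hreal : ∑ k ∈ Finset.range (n + 1),
      (n.choose k : ℝ) * 4 ^ k * (-1) ^ k * (k.factorial : ℝ) ^ 2 / ((2 * k + 1).factorial : ℝ)
      = (1 : ℝ) / (2 * (n : ℝ) + 1) := by
    have hterm : ∀ k, (n.choose k : ℝ) * 4 ^ k * (-1) ^ k * (k.factorial : ℝ) ^ 2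
        / ((2 * k + 1).factorial : ℝ)
        = ∫ x in (0:ℝ)..1, (n.choose k : ℝ) * (-4 * (x * (1 - x))) ^ k := by
      intro k
      have h4 : ∀ x : ℝ, (-4 * (x * (1 - x))) ^ k = ((-1) ^ k * 4 ^ k) * (x ^ k * (1 - x) ^ k) := by
        intro x
        rw [show (-4 * (x * (1 - x))) = (-1) * 4 * x * (1 - x) by ring]
        rw [mul_pow, mul_pow, mul_pow]
        ring
      have : ∀ x : ℝ, (n.choose k : ℝ) * (-4 * (x * (1 - x))) ^ k
          = ((n.choose k : ℝ) * 4 ^ k * (-1) ^ k) * (x ^ k * (1 - x) ^ k) := by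
        intro x; rw [h4]; ring
      simp_rw [this]
      rw [intervalIntegral.integral_const_mul, beta_nat]
      have : k + k + 1 = 2 * k + 1 := by omega
      rw [this]
      ring
    simp_rw [hterm]
    rw [← intervalIntegral.integral_finset_sum]
    · have hsum : ∀ x : ℝ, ∑ k ∈ Finset.range (n + 1),
          (n.choose k : ℝ) * (-4 * (x * (1 - x))) ^ k = (2 * x - 1) ^ (2 * n) := by
        intro x
        have := add_pow (-4 * (x * (1 - x))) 1 n
        simp only [one_pow, mul_one] at this
        rw [pow_mul, show (2 * x - 1) ^ 2 = -4 * (x * (1 - x)) + 1 by ring, this]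
        apply Finset.sum_congr rfl
        intro k hk
        ring
      simp_rw [hsum]
      rw [intervalIntegral.integral_comp_mul_sub (fun y : ℝ => y ^ (2 * n)) two_ne_zero 1]
      simp [integral_pow]
      have hm : (-1 : ℝ) ^ (2 * n + 1) = -1 := by
        rw [pow_succ, pow_mul]; norm_num
      have hd : (2 * (n:ℝ) + 1) ≠ 0 := by positivity
      rw [hm]
      field_simp
      norm_num
    · intro k hk
      apply Continuous.intervalIntegrable
      continuity
  apply Rat.cast_injective (α := ℝ)
  push_cast
  exact hreal
end

section
/- For all natural numbers n ≥ 1 and integers j with 0 ≤ j ≤ n: the sum ∑_{k=0}^{n} (-1)^k C(2n+1, k) (2n+1-2k)^{2j+1} equals 0 if 0 ≤ j ≤ n-1, and equals 4^n (2n+1)! if j = n. -/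
open Finset

lemma aux_S : ∀ m : ℕ, ∀ q : ℕ, q ≤ m →
    ∑ k ∈ range (m+1), (-1:ℤ)^k * (m.choose k) * (k:ℤ)^q
      = if q = m then (-1:ℤ)^m * (m.factorial : ℤ) else 0 := by
  intro m
  induction m with
  | zero => intro q hq; interval_cases q; simp
  | succ m IH =>
    intro q hq
    rcases Nat.eq_zero_or_pos q with rfl | hq0
    · rw [if_neg (by omega)]
      have := Int.alternating_sum_range_choose (n := m+1)
      rw [if_neg (by omega)] at this
      simpa using this
    obtain ⟨q', rfl⟩ : ∃ q', q = q'+1 := ⟨q-1, by omega⟩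
    have hq'm : q' ≤ m := by omega
    have step1 : ∑ k ∈ range (m+2), (-1:ℤ)^k * ((m+1).choose k) * (k:ℤ)^(q'+1)
        = ∑ i ∈ range (m+1), (-1:ℤ)^(i+1) * ((m+1).choose (i+1)) * ((i:ℤ)+1)^(q'+1) := by
      rw [Finset.sum_range_succ']
      simp
    have key : ∀ i : ℕ, (-1:ℤ)^(i+1) * ((m+1).choose (i+1)) * ((i:ℤ)+1)^(q'+1)
        = -((m:ℤ)+1) * ∑ r ∈ range (q'+1), ((q'.choose r : ℤ) * ((-1:ℤ)^i * (m.choose i) * (i:ℤ)^r)) := by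
      intro i
      have hc : (((m+1).choose (i+1) : ℤ)) * ((i:ℤ)+1) = ((m:ℤ)+1) * (m.choose i) := by
        exact_mod_cast (Nat.add_one_mul_choose_eq m i).symm
      have hb : ((i:ℤ)+1)^(q'+1) = ((i:ℤ)+1)^q' * ((i:ℤ)+1) := by ring
      have hexp : ((i:ℤ)+1)^q' = ∑ r ∈ range (q'+1), (i:ℤ)^r * (q'.choose r : ℤ) := by
        have := add_pow (i:ℤ) 1 q'
        simpa using this
      rw [hb, hexp, Finset.sum_mul, Finset.mul_sum, Finset.mul_sum]
      apply Finset.sum_congr rfl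
      intro r _
      linear_combination ((-1:ℤ)^(i+1) * ((i:ℤ)^r * (q'.choose r : ℤ))) * hc
    rw [step1]
    simp only [key]
    rw [← Finset.mul_sum, Finset.sum_comm]
    have inner : ∀ r ∈ range (q'+1),
        ∑ i ∈ range (m+1), (q'.choose r : ℤ) * ((-1:ℤ)^i * (m.choose i) * (i:ℤ)^r)
        = (q'.choose r : ℤ) * (if r = m then (-1:ℤ)^m * (m.factorial : ℤ) else 0) := by
      intro r hr
      simp only [mem_range] at hr
      rw [← Finset.mul_sum, IH r (by omega)]
    rw [Finset.sum_congr rfl inner]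
    simp only [mul_ite, mul_zero]
    rw [Finset.sum_ite_eq' (range (q'+1)) m]
    by_cases hqm : q' = m
    · subst hqm
      rw [if_pos (self_mem_range_succ _), if_pos rfl]
      simp [Nat.factorial_succ]
      ring
    · rw [if_neg (by simp only [mem_range]; omega), if_neg (by omega), mul_zero]

theorem stmt_4 (n j : ℕ) (hn : 1 ≤ n) (hj : j ≤ n) :
    ∑ k ∈ Finset.range (n + 1),
      (-1 : ℤ) ^ k * ((2 * n + 1).choose k : ℤ) * ((2 * n + 1 : ℤ) - 2 * k) ^ (2 * j + 1)
    = if j = n then 4 ^ n * ((2 * n + 1).factorial : ℤ) else 0 := by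
  set f : ℕ → ℤ := fun k =>
    (-1 : ℤ) ^ k * ((2 * n + 1).choose k : ℤ) * ((2 * n + 1 : ℤ) - 2 * k) ^ (2 * j + 1) with hf
  set T : ℤ := ∑ k ∈ range (n+1), f k with hT
  -- full sum equals 2T
  have hsplit : (∑ k ∈ range (2*n+2), f k) = T + ∑ i ∈ range (n+1), f (n+1+i) := by
    rw [show 2*n+2 = (n+1)+(n+1) by ring, Finset.sum_range_add, hT]
  have hrefl : ∑ i ∈ range (n+1), f (n+1+i) = ∑ i ∈ range (n+1), f (2*n+1-i) := by
    rw [← Finset.sum_range_reflect (fun i => f (n+1+i)) (n+1)]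
    apply Finset.sum_congr rfl
    intro i hi
    simp only [mem_range] at hi
    congr 1
    omega
  have hsym : ∀ i ∈ range (n+1), f (2*n+1-i) = f i := by
    intro i hi
    simp only [mem_range] at hi
    have hi' : i ≤ 2*n+1 := by omega
    have hpow : (-1:ℤ)^(2*n+1-i) = -(-1:ℤ)^i := by
      rw [show 2*n+1-i = (2*(n-i)+1)+i by omega, pow_add, pow_succ, pow_mul]
      simp
    have hch : (2*n+1).choose (2*n+1-i) = (2*n+1).choose i := Nat.choose_symm hi'
    have hcast : ((2*n+1-i : ℕ) : ℤ) = 2*(n:ℤ)+1 - i := by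
      push_cast [hi']
      ring
    have hbase : ((2 * n + 1 : ℤ) - 2 * ((2*n+1-i : ℕ) : ℤ)) = -((2 * n + 1 : ℤ) - 2 * i) := by
      rw [hcast]; ring
    have hneg : (-((2 * (n:ℤ) + 1) - 2 * i))^(2*j+1) = -(((2 * (n:ℤ) + 1) - 2 * i))^(2*j+1) :=
      Odd.neg_pow ⟨j, by ring⟩ _
    simp only [hf]
    rw [hpow, hch]
    rw [show (2 * (n:ℤ) + 1 - 2 * ((2*n+1-i : ℕ) : ℤ)) = -((2 * (n:ℤ) + 1) - 2 * i) by rw [hcast]; ring]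
    rw [hneg]
    ring
  have h2T : ∑ k ∈ range (2*n+2), f k = 2 * T := by
    rw [hsplit, hrefl, Finset.sum_congr rfl hsym, ← hT]
    ring
  -- compute the full sum by binomial expansion
  have hexp : ∀ k : ℕ, f k = ∑ q ∈ range (2*j+2),
      ((2*(n:ℤ)+1)^q * (-2:ℤ)^(2*j+1-q) * ((2*j+1).choose q : ℤ))
        * ((-1:ℤ)^k * ((2*n+1).choose k : ℤ) * (k:ℤ)^(2*j+1-q)) := by
    intro k
    have := add_pow (2*(n:ℤ)+1) (-(2*(k:ℤ))) (2*j+1)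
    simp only [hf]
    rw [show ((2 * n + 1 : ℤ) - 2 * k) = (2*(n:ℤ)+1) + (-(2*(k:ℤ))) by ring, this,
      Finset.mul_sum]
    apply Finset.sum_congr rfl
    intro q hq
    rw [show (-(2*(k:ℤ)))^(2*j+1-q) = (-2:ℤ)^(2*j+1-q) * (k:ℤ)^(2*j+1-q) by
      rw [← mul_pow]; ring_nf]
    ring
  have hfull : ∑ k ∈ range (2*n+2), f k
      = ∑ q ∈ range (2*j+2), ((2*(n:ℤ)+1)^q * (-2:ℤ)^(2*j+1-q) * ((2*j+1).choose q : ℤ))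
          * (if 2*j+1-q = 2*n+1 then (-1:ℤ)^(2*n+1) * ((2*n+1).factorial : ℤ) else 0) := by
    rw [show 2*n+2 = (2*n+1)+1 by ring]
    rw [Finset.sum_congr rfl (fun k _ => hexp k), Finset.sum_comm]
    apply Finset.sum_congr rfl
    intro q hq
    rw [← Finset.mul_sum, aux_S (2*n+1) (2*j+1-q) (by omega)]
  by_cases hjn : j = n
  · subst hjn
    rw [if_pos rfl]
    have hone : (∑ q ∈ range (2*j+2),
        ((2*(j:ℤ)+1)^q * (-2:ℤ)^(2*j+1-q) * ((2*j+1).choose q : ℤ))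
          * (if 2*j+1-q = 2*j+1 then (-1:ℤ)^(2*j+1) * ((2*j+1).factorial : ℤ) else 0))
        = 2 * (4 ^ j * ((2 * j + 1).factorial : ℤ)) := by
      rw [Finset.sum_eq_single_of_mem 0 (by simp)
        (fun q hq hq0 => by rw [if_neg (by simp only [mem_range] at hq; omega), mul_zero])]
      rw [if_pos (by omega)]
      simp only [pow_zero, Nat.sub_zero, Nat.choose_zero_right, Nat.cast_one]
      rw [show (-2:ℤ)^(2*j+1) = -(2:ℤ)^(2*j+1) by rw [Odd.neg_pow ⟨j, by ring⟩],
        show (-1:ℤ)^(2*j+1) = -1 by rw [Odd.neg_one_pow ⟨j, by ring⟩],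
        show (2:ℤ)^(2*j+1) = 2 * 4^j by rw [pow_succ, pow_mul]; ring]
      ring
    rw [hone] at hfull
    linarith
  · rw [if_neg hjn]
    have hz : ∀ q ∈ range (2*j+2), ((2*(n:ℤ)+1)^q * (-2:ℤ)^(2*j+1-q) * ((2*j+1).choose q : ℤ))
        * (if 2*j+1-q = 2*n+1 then (-1:ℤ)^(2*n+1) * ((2*n+1).factorial : ℤ) else 0) = 0 := by
      intro q hq
      rw [if_neg (by omega), mul_zero]
    rw [Finset.sum_eq_zero hz] at hfull
    rw [hfull] at h2T
    linarith
end

section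
/- For all natural numbers q, n with 0 ≤ q < n, the sum ∑_{m=0}^{n} (c_{2n-2m,n} / (2m)!) · Ω_{q,m} equals 0. -/
open Real Filter Finset

section PSLemmas

/-- `PS f c` : `f` has power series at `0` with coefficients `c`. -/
def PS (f : ℝ → ℝ) (c : ℕ → ℝ) : Prop :=
  ∃ p : FormalMultilinearSeries ℝ ℝ ℝ, HasFPowerSeriesAt f p 0 ∧ ∀ k, p.coeff k = c k


lemma PS.analyticAt {f c} (h : PS f c) : AnalyticAt ℝ f 0 := by
  obtain ⟨p, hp, -⟩ := h; exact ⟨p, hp⟩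

lemma PS.iteratedDeriv_eq {f c} (h : PS f c) (k : ℕ) :
    iteratedDeriv k f 0 = k.factorial * c k := by
  obtain ⟨p, hp, hc⟩ := h
  obtain ⟨r, hball⟩ := hp
  have := hball.factorial_smul (1 : ℝ) k
  rw [iteratedDeriv_eq_iteratedFDeriv, ← this, FormalMultilinearSeries.apply_eq_pow_smul_coeff,
    hc, one_pow, smul_eq_mul, one_mul, nsmul_eq_mul]

lemma PS.unique {f c c'} (h : PS f c) (h' : PS f c') : c = c' := by
  funext k
  have h1 := h.iteratedDeriv_eq k
  have h2 := h'.iteratedDeriv_eq k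
  have : (k.factorial : ℝ) ≠ 0 := Nat.cast_ne_zero.mpr k.factorial_ne_zero
  field_simp at h1 h2
  rw [h1] at h2
  exact mul_left_cancel₀ this h2

lemma PS.congr {f g c} (h : PS f c) (hg : g =ᶠ[nhds 0] f) : PS g c := by
  obtain ⟨p, hp, hc⟩ := h
  exact ⟨p, hp.congr hg.symm, hc⟩

lemma PS_of_hasSum {c : ℕ → ℝ} {f : ℝ → ℝ} {r : ℝ} (hr : 0 < r)
    (h : ∀ y : ℝ, |y| < r → HasSum (fun k => c k * y ^ k) (f y)) : PS f c := by
  set p := FormalMultilinearSeries.ofScalars ℝ c with hp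
  have hcoeff : ∀ k, p.coeff k = c k := by
    intro k
    show FormalMultilinearSeries.ofScalars ℝ c k 1 = c k
    rw [show (1 : Fin k → ℝ) = (fun _ => (1:ℝ)) from rfl,
      FormalMultilinearSeries.ofScalars_apply_eq]
    simp
  have hnorm : ∀ k, ‖p k‖ = |c k| := by
    intro k
    rw [p.norm_apply_eq_norm_coef, hcoeff]; rfl
  -- a positive real below r
  set t : ℝ := r / 2 with ht
  have ht0 : 0 < t := by positivity
  have htr : t < r := by linarith
  -- bound on terms
  obtain ⟨C, hC⟩ : ∃ C, ∀ k, |c k * t ^ k| ≤ C := by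
    have hs := (h t (by rw [abs_of_pos ht0]; exact htr)).summable
    have h0 : Filter.Tendsto (fun k => |c k * t ^ k|) atTop (nhds 0) := by
      simpa [abs_zero] using hs.tendsto_atTop_zero.abs
    obtain ⟨C, hC⟩ := h0.bddAbove_range
    exact ⟨C, fun k => hC (Set.mem_range_self k)⟩
  have hrad : (t.toNNReal : ENNReal) ≤ p.radius := by
    apply p.le_radius_of_bound C
    intro k
    rw [hnorm]
    calc |c k| * (t.toNNReal : ℝ) ^ k = |c k * t ^ k| := by
          rw [abs_mul, abs_pow, Real.coe_toNNReal _ ht0.le, abs_of_pos ht0]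
    _ ≤ C := hC k
  have hrad0 : 0 < p.radius := lt_of_lt_of_le (by simpa using ht0) hrad
  have hsum := p.hasFPowerSeriesOnBall hrad0
  have hat : HasFPowerSeriesAt p.sum p 0 := ⟨p.radius, hsum⟩
  refine ⟨p, hat.congr ?_, hcoeff⟩
  have : ∀ y : ℝ, |y| < t → f y = p.sum y := by
    intro y hy
    have hmem : y ∈ Metric.eball (0 : ℝ) p.radius := by
      refine lt_of_lt_of_le ?_ hrad
      simpa [edist_eq_enorm_sub, ENNReal.coe_lt_coe, ← NNReal.coe_lt_coe, Real.coe_toNNReal _ ht0.le] using hy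
    have h2 := hsum.hasSum hmem
    simp only [zero_add] at h2
    have h3 : HasSum (fun k => c k * y ^ k) (p.sum y) := by
      refine h2.congr_fun fun k => ?_
      rw [FormalMultilinearSeries.apply_eq_pow_smul_coeff, hcoeff, smul_eq_mul]; ring
    exact (h y (hy.trans htr)).unique h3
  filter_upwards [Metric.ball_mem_nhds (0 : ℝ) ht0] with y hy
  exact (this y (by simpa [Real.dist_eq] using hy)).symm


/-- HasSum of the coefficient series inside the ball. -/
lemma PS.hasSum_of_lt {f c} (h : PS f c) :
    ∃ r : ℝ, 0 < r ∧ ∀ y : ℝ, |y| < r →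
      HasSum (fun k => c k * y ^ k) (f y) ∧ Summable (fun k => |c k * y ^ k|) := by
  obtain ⟨p, hp, hc⟩ := h
  obtain ⟨R, hball⟩ := hp
  obtain ⟨r, hr0, hrR⟩ : ∃ r : ℝ, 0 < r ∧ (r.toNNReal : ENNReal) < R := by
    rcases ENNReal.lt_iff_exists_nnreal_btwn.mp hball.r_pos with ⟨t, ht0, htR⟩
    refine ⟨t, ?_, by simpa [Real.toNNReal_coe] using htR⟩
    exact_mod_cast (by simpa using ht0 : (0:NNReal) < t)
  refine ⟨r, hr0, fun y hy => ?_⟩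
  have hmem : y ∈ Metric.eball (0 : ℝ) R := by
    refine lt_of_lt_of_le ?_ hrR.le
    simpa [edist_eq_enorm_sub, ENNReal.coe_lt_coe, ← NNReal.coe_lt_coe,
      Real.coe_toNNReal _ hr0.le] using hy
  have h2 := hball.hasSum hmem
  simp only [zero_add] at h2
  have h3 : HasSum (fun k => c k * y ^ k) (f y) := by
    refine h2.congr_fun fun k => ?_
    rw [FormalMultilinearSeries.apply_eq_pow_smul_coeff, hc, smul_eq_mul]; ring
  refine ⟨h3, ?_⟩
  have hyR : (‖y‖₊ : ENNReal) < R := by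
    refine lt_of_lt_of_le ?_ hrR.le
    rw [ENNReal.coe_lt_coe, ← NNReal.coe_lt_coe, coe_nnnorm, Real.norm_eq_abs,
      Real.coe_toNNReal _ hr0.le]
    exact hy
  have hsum := p.summable_norm_mul_pow (r := ‖y‖₊) (hyR.trans_le hball.r_le)
  refine hsum.of_nonneg_of_le (fun k => abs_nonneg _) fun k => ?_
  rw [abs_mul, abs_pow, p.norm_apply_eq_norm_coef, hc]
  simp [Real.norm_eq_abs, coe_nnnorm]

lemma PS.mul (hf : PS f a) (hg : PS g b) :
    PS (fun x => f x * g x) (fun N => ∑ k ∈ range (N + 1), a k * b (N - k)) := by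
  obtain ⟨r1, hr1, H1⟩ := hf.hasSum_of_lt
  obtain ⟨r2, hr2, H2⟩ := hg.hasSum_of_lt
  refine PS_of_hasSum (r := min r1 r2) (lt_min hr1 hr2) fun y hy => ?_
  obtain ⟨hs1, ha1⟩ := H1 y (hy.trans_le (min_le_left _ _))
  obtain ⟨hs2, ha2⟩ := H2 y (hy.trans_le (min_le_right _ _))
  have ha1' : Summable fun k => ‖a k * y ^ k‖ := by
    simpa only [Real.norm_eq_abs] using ha1
  have ha2' : Summable fun k => ‖b k * y ^ k‖ := by
    simpa only [Real.norm_eq_abs] using ha2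
  have hsummable := summable_norm_sum_mul_range_of_summable_norm ha1' ha2'
  have hsummable' : Summable fun N => (∑ k ∈ range (N + 1), a k * b (N - k)) * y ^ N := by
    refine (hsummable.of_norm).congr fun N => ?_
    rw [Finset.sum_mul]
    refine Finset.sum_congr rfl fun k hk => ?_
    have hk' : k ≤ N := Nat.lt_succ_iff.mp (Finset.mem_range.mp hk)
    have hpow : y ^ k * y ^ (N - k) = y ^ N := by rw [← pow_add]; congr 1; omega
    calc a k * y ^ k * (b (N - k) * y ^ (N - k))
        = a k * b (N - k) * (y ^ k * y ^ (N - k)) := by ring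
      _ = a k * b (N - k) * y ^ N := by rw [hpow]
  have htsum := tsum_mul_tsum_eq_tsum_sum_range_of_summable_norm ha1' ha2'
  rw [hs1.tsum_eq, hs2.tsum_eq] at htsum
  have : (∑' N, ∑ k ∈ range (N + 1), (a k * y ^ k) * (b (N - k) * y ^ (N - k)))
      = ∑' N, (∑ k ∈ range (N + 1), a k * b (N - k)) * y ^ N := by
    congr 1
    funext N
    rw [Finset.sum_mul]
    refine Finset.sum_congr rfl fun k hk => ?_
    have hk' : k ≤ N := Nat.lt_succ_iff.mp (Finset.mem_range.mp hk)
    have : y ^ k * y ^ (N - k) = y ^ N := by rw [← pow_add]; congr 1; omega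
    calc a k * y ^ k * (b (N-k) * y ^ (N-k)) = a k * b (N-k) * (y ^ k * y ^ (N-k)) := by ring
    _ = a k * b (N - k) * y ^ N := by rw [this]
  rw [this] at htsum
  have := hsummable'.hasSum
  rwa [← htsum] at this


variable {f g : ℝ → ℝ} {a b : ℕ → ℝ}

lemma PS.of_coeff_eq {c c'} (h : PS f c) (hcc : ∀ k, c' k = c k) : PS f c' := by
  have : c' = c := funext hcc
  rwa [this]

lemma PS.add (hf : PS f a) (hg : PS g b) :
    PS (fun x => f x + g x) (fun k => a k + b k) := by
  obtain ⟨p, hp, hpc⟩ := hf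
  obtain ⟨q, hq, hqc⟩ := hg
  refine ⟨p + q, ?_, fun k => ?_⟩
  · exact hp.add hq
  · simp only [FormalMultilinearSeries.coeff] at *
    rw [← hpc k, ← hqc k]; rfl

lemma PS.sub (hf : PS f a) (hg : PS g b) :
    PS (fun x => f x - g x) (fun k => a k - b k) := by
  obtain ⟨p, hp, hpc⟩ := hf
  obtain ⟨q, hq, hqc⟩ := hg
  refine ⟨p - q, ?_, fun k => ?_⟩
  · have := hp.sub hq
    convert this using 1
    rfl
  · simp only [FormalMultilinearSeries.coeff] at *
    rw [← hpc k, ← hqc k]; rfl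

lemma PS_const (A : ℝ) : PS (fun _ => A) (fun k => if k = 0 then A else 0) := by
  refine PS_of_hasSum (r := 1) one_pos fun y _ => ?_
  have : HasSum (fun k : ℕ => if k = 0 then A else 0) A := hasSum_ite_eq 0 A
  refine this.congr_fun fun k => ?_
  rcases eq_or_ne k 0 with rfl | hk
  · simp
  · simp [hk]

lemma PS_zero : PS (fun _ => (0:ℝ)) (fun _ => 0) := by
  have := PS_const 0
  exact this.of_coeff_eq (fun k => by simp) |>.of_coeff_eq fun k => rfl

lemma PS.const_mul (hf : PS f a) (A : ℝ) :
    PS (fun x => A * f x) (fun k => A * a k) := by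
  have h := (PS_const A).mul hf
  refine h.of_coeff_eq fun k => ?_
  rw [Finset.sum_eq_single_of_mem 0 (Finset.mem_range.mpr (Nat.succ_pos k))]
  · simp
  · intro j _ hj
    simp [hj]

lemma PS.finsum {ι : Type*} (s : Finset ι) (F : ι → ℝ → ℝ) (C : ι → ℕ → ℝ)
    (h : ∀ i ∈ s, PS (F i) (C i)) :
    PS (fun x => ∑ i ∈ s, F i x) (fun k => ∑ i ∈ s, C i k) := by
  classical
  induction s using Finset.induction_on with
  | empty => simpa using PS_zero
  | insert i s hns ih =>
    have h1 := h i (Finset.mem_insert_self i s)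
    have h2 := ih fun j hj => h j (Finset.mem_insert_of_mem hj)
    have := h1.add h2
    refine (this.of_coeff_eq fun k => ?_).congr ?_
    · rw [Finset.sum_insert hns]
    · filter_upwards with x
      rw [Finset.sum_insert hns]

lemma PS_pow (m : ℕ) : PS (fun x => x ^ m) (fun k => if k = m then 1 else 0) := by
  refine PS_of_hasSum (r := 1) one_pos fun y _ => ?_
  have : HasSum (fun k : ℕ => if k = m then y ^ m else 0) (y ^ m) := hasSum_ite_eq m _
  refine this.congr_fun fun k => ?_
  rcases eq_or_ne k m with rfl | hk
  · simp
  · simp [hk]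

lemma PS_cosh (d : ℝ) : PS (fun x => Real.cosh (d * x))
    (fun k => if Even k then d ^ k / k.factorial else 0) := by
  refine PS_of_hasSum (r := 1) one_pos fun y _ => ?_
  have h0 := Real.hasSum_cosh (d * y)
  have hinj : Function.Injective (fun n : ℕ => 2 * n) := fun m n h => by dsimp at h; omega
  refine (hinj.hasSum_iff ?_).mp ?_
  · intro k hk
    have hne : ¬ Even k := by
      simp only [Set.mem_range] at hk
      rintro ⟨m, hm⟩
      exact hk ⟨m, by omega⟩
    simp [hne]
  · refine h0.congr_fun fun n => ?_
    simp only [Function.comp_apply]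
    rw [if_pos (even_two_mul n), mul_pow]
    ring

noncomputable def gfun : ℝ → ℝ := fun x => if x = 0 then 1 else Real.sinh x / x

lemma PS_gfun : PS gfun (fun k => if Even k then (1:ℝ) / (k+1).factorial else 0) := by
  refine PS_of_hasSum (r := 1) one_pos fun y _ => ?_
  rcases eq_or_ne y 0 with rfl | hy
  · have : HasSum (fun k : ℕ => if k = 0 then (1:ℝ) else 0) 1 := hasSum_ite_eq 0 1
    have hg : gfun 0 = 1 := if_pos rfl
    rw [hg]
    refine this.congr_fun fun k => ?_
    rcases eq_or_ne k 0 with rfl | hk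
    · norm_num
    · simp [hk, zero_pow hk]
  · have h0 := (Real.hasSum_sinh y).div_const y
    have hg : gfun y = Real.sinh y / y := if_neg hy
    rw [hg]
    have hinj : Function.Injective (fun n : ℕ => 2 * n) := fun m n h => by dsimp at h; omega
    refine (hinj.hasSum_iff ?_).mp ?_
    · intro k hk
      have hne : ¬ Even k := by
        simp only [Set.mem_range] at hk
        rintro ⟨m, hm⟩
        exact hk ⟨m, by omega⟩
      simp [hne]
    · refine h0.congr_fun fun n => ?_
      simp only [Function.comp_apply]
      rw [if_pos (even_two_mul n), pow_succ]
      field_simp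

lemma PS_of_analyticAt {f : ℝ → ℝ} (h : AnalyticAt ℝ f 0) : ∃ c, PS f c := by
  obtain ⟨p, hp⟩ := h
  exact ⟨p.coeff, p, hp, fun _ => rfl⟩

lemma PS.deriv {f : ℝ → ℝ} {a : ℕ → ℝ} (hf : PS f a) :
    PS (_root_.deriv f) (fun k => ((k+1 : ℕ) : ℝ) * a (k+1)) := by
  have hA : AnalyticAt ℝ f 0 := hf.analyticAt
  obtain ⟨t, ht, hto, h0t⟩ := eventually_nhds_iff.mp hA.eventually_analyticAt
  have hd : AnalyticAt ℝ (_root_.deriv f) 0 := (AnalyticOnNhd.deriv (fun y hy => ht y hy)) 0 h0t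
  obtain ⟨d, hd'⟩ := PS_of_analyticAt hd
  refine hd'.of_coeff_eq fun k => ?_
  have h1 := hd'.iteratedDeriv_eq k
  have h2 := hf.iteratedDeriv_eq (k+1)
  rw [iteratedDeriv_succ'] at h2
  rw [h1] at h2
  have hk : (k.factorial : ℝ) ≠ 0 := Nat.cast_ne_zero.mpr k.factorial_ne_zero
  have h3 : (k.factorial : ℝ) * (((k+1:ℕ) : ℝ) * a (k+1)) = (k.factorial : ℝ) * d k := by
    rw [h2, Nat.factorial_succ]
    push_cast
    ring
  exact mul_left_cancel₀ hk h3

lemma gfun_zero : gfun 0 = 1 := if_pos rfl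

lemma keyA (s : ℕ) {cu : ℕ → ℝ}
    (hcu : PS (fun x => Real.cosh x * ((gfun x)⁻¹) ^ (2*s+3)) cu) :
    cu (2*s+2) = 0 := by
  -- ψ and its series
  have hginv : AnalyticAt ℝ (fun x => (gfun x)⁻¹) 0 := by
    refine (PS_gfun.analyticAt).inv ?_
    rw [gfun_zero]; norm_num
  have hψA : AnalyticAt ℝ (fun x => ((gfun x)⁻¹) ^ (2*s+2)) 0 := hginv.pow _
  obtain ⟨cψ, hψ⟩ := PS_of_analyticAt hψA
  set ψ : ℝ → ℝ := fun x => ((gfun x)⁻¹) ^ (2*s+2) with hψdef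
  have hψ' : PS (deriv ψ) (fun k => ((k+1 : ℕ) : ℝ) * cψ (k+1)) := hψ.deriv
  -- series for x * deriv ψ x
  have hxψ' : PS (fun x => x * deriv ψ x)
      (fun N => ∑ k ∈ Finset.range (N+1),
        (if k = 1 then (1:ℝ) else 0) * (((N-k+1 : ℕ) : ℝ) * cψ (N-k+1))) := by
    have := (PS_pow 1).mul hψ'
    refine this.congr ?_
    filter_upwards with x
    rw [pow_one]
  -- series for u
  set A : ℝ := (((2*s+2 : ℕ) : ℝ))⁻¹ with hAdef
  have hu : PS (fun x => ψ x - A * (x * deriv ψ x))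
      (fun k => cψ k - A * (∑ j ∈ Finset.range (k+1),
        (if j = 1 then (1:ℝ) else 0) * (((k-j+1 : ℕ) : ℝ) * cψ (k-j+1)))) :=
    hψ.sub (hxψ'.const_mul A)
  -- the coefficient at 2s+2 vanishes
  have hcoeff : cψ (2*s+2) - A * (∑ j ∈ Finset.range (2*s+2+1),
      (if j = 1 then (1:ℝ) else 0) * (((2*s+2-j+1 : ℕ) : ℝ) * cψ (2*s+2-j+1))) = 0 := by
    rw [Finset.sum_eq_single_of_mem 1 (Finset.mem_range.mpr (by omega))]
    · have h1 : 2*s+2-1+1 = 2*s+2 := by omega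
      rw [if_pos rfl, h1, one_mul, hAdef]
      have : (((2*s+2 : ℕ) : ℝ)) ≠ 0 := by positivity
      field_simp
      ring
    · intro j _ hj
      simp [hj]
  -- function identity
  have hfun : (fun x => Real.cosh x * ((gfun x)⁻¹) ^ (2*s+3))
      = fun x => ψ x - A * (x * deriv ψ x) := by
    funext x
    rcases eq_or_ne x 0 with rfl | hx
    · simp [hψdef, gfun_zero]
    · have hS : Real.sinh x ≠ 0 := by
        simpa [Real.sinh_eq_zero] using hx
      -- local form of ψ
      have hψloc : ψ =ᶠ[nhds x] (fun t => (t / Real.sinh t) ^ (2*s+2)) := by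
        filter_upwards [eventually_ne_nhds hx] with t ht
        rw [hψdef]
        simp only
        rw [gfun, if_neg ht, inv_div]
      have hder : HasDerivAt (fun t => (t / Real.sinh t) ^ (2*s+2))
          ((((2*s+2 : ℕ)) : ℝ) * (x / Real.sinh x) ^ (2*s+1) *
            ((1 * Real.sinh x - x * Real.cosh x) / Real.sinh x ^ 2)) x := by
        have h1 : HasDerivAt (fun t : ℝ => t / Real.sinh t)
            ((1 * Real.sinh x - x * Real.cosh x) / Real.sinh x ^ 2) x :=
          (hasDerivAt_id x).div (Real.hasDerivAt_sinh x) hS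
        have := h1.pow (2*s+2)
        exact this
      have hdψ : deriv ψ x = (((2*s+2 : ℕ)) : ℝ) * (x / Real.sinh x) ^ (2*s+1) *
          ((1 * Real.sinh x - x * Real.cosh x) / Real.sinh x ^ 2) := by
        rw [hψloc.deriv_eq, hder.deriv]
      have hginvx : (gfun x)⁻¹ = x / Real.sinh x := by
        rw [gfun, if_neg hx, inv_div]
      have hψx : ψ x = (x / Real.sinh x) ^ (2*s+2) := by
        rw [hψdef]; simp only; rw [hginvx]
      rw [hψx, hdψ, hginvx, hAdef]
      set S := Real.sinh x
      set c := Real.cosh x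
      have hn : (((2*s+2 : ℕ) : ℝ)) ≠ 0 := by positivity
      have hB : c * (x/S)^(2*s+3) = (x/S)^(2*s+1) * (c * (x/S)^2) := by
        rw [show 2*s+3 = 2*s+1+2 by omega, pow_add]; ring
      have hB2 : (x/S)^(2*s+2) = (x/S)^(2*s+1) * (x/S) := by
        rw [show 2*s+2 = 2*s+1+1 by omega, pow_add, pow_one]
      have hcancel : (((2*s+2 : ℕ) : ℝ))⁻¹ * (x * ((((2*s+2 : ℕ)) : ℝ) * (x/S)^(2*s+1) *
          ((1 * S - x * c) / S^2))) = (x/S)^(2*s+1) * (x * (S - x * c) / S^2) := by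
        field_simp
      rw [hB, hB2, hcancel]
      have hmain : c * (x/S)^2 = (x/S) - x * (S - x * c)/S^2 := by
        field_simp
        ring
      rw [← mul_sub, ← hmain]
  rw [hfun] at hcu
  have := PS.unique hcu hu
  rw [this]
  exact hcoeff

lemma pairSum (q : ℕ) (G : ℕ → ℝ) :
    ∑ k ∈ range (2*q+2), G k = ∑ j ∈ range (q+1), (G j + G (2*q+1-j)) := by
  induction q generalizing G with
  | zero => simp [Finset.sum_range_succ]
  | succ q ih =>
    have h1 : ∑ k ∈ range (2*(q+1)+2), G k
        = ((∑ k ∈ range (2*q+2), G (k+1)) + G 0) + G (2*q+3) := by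
      rw [show 2*(q+1)+2 = (2*q+3)+1 by omega, Finset.sum_range_succ,
        show 2*q+3 = (2*q+2)+1 by omega, Finset.sum_range_succ']
    rw [h1, ih (fun k => G (k+1))]
    rw [Finset.sum_range_succ' (fun j => G j + G (2*(q+1)+1-j)) (q+1)]
    have h2 : ∀ j ∈ range (q+1), (fun j => G j + G (2*(q+1)+1-j)) (j+1)
        = G (j+1) + G (2*q+1-j+1) := by
      intro j hj
      have : 2*(q+1)+1-(j+1) = 2*q+1-j+1 := by
        have := Finset.mem_range.mp hj
        omega
      simp only [this]
    rw [Finset.sum_congr rfl h2]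
    simp only [Nat.sub_zero]
    ring_nf

lemma cosh_pow_eq (q : ℕ) (x : ℝ) :
    (1/4^q : ℝ) * ∑ j ∈ range (q+1), ((2*q+1).choose j : ℝ) *
      Real.cosh ((((2*q+1 : ℕ) : ℝ) - 2*j) * x) = Real.cosh x ^ (2*q+1) := by
  set N := 2*q+1 with hN
  set G : ℕ → ℝ := fun k => ((N.choose k : ℕ) : ℝ) * Real.exp ((2*(k:ℝ) - (N:ℝ)) * x)
    with hG
  have hnum : (Real.exp x + Real.exp (-x))^N = ∑ k ∈ range (N+1), G k := by
    rw [add_pow]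
    refine Finset.sum_congr rfl fun k hk => ?_
    have hkN : k ≤ N := Nat.lt_succ_iff.mp (Finset.mem_range.mp hk)
    rw [hG]
    simp only
    rw [← Real.exp_nat_mul, ← Real.exp_nat_mul, ← Real.exp_add]
    have hcast : ((N - k : ℕ) : ℝ) = (N:ℝ) - (k:ℝ) := by
      push_cast [Nat.cast_sub hkN]; ring
    rw [show (k:ℝ) * x + ((N-k : ℕ):ℝ) * (-x) = ((k:ℝ) - ((N-k:ℕ):ℝ)) * x from by ring,
      hcast, show (k:ℝ) - ((N:ℝ) - (k:ℝ)) = 2*(k:ℝ) - (N:ℝ) from by ring]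
    ring
  have hrhs : Real.cosh x ^ N = (∑ k ∈ range (N+1), G k) / 2^N := by
    rw [Real.cosh_eq, div_pow, hnum]
  have hpair : ∀ j ∈ range (q+1), ((N.choose j : ℕ):ℝ) * Real.cosh (((N:ℝ) - 2*j)*x)
      = (1/2) * (G j + G (2*q+1-j)) := by
    intro j hj
    have hjq : j ≤ q := Nat.lt_succ_iff.mp (Finset.mem_range.mp hj)
    have hjN : j ≤ N := by omega
    rw [hG]
    simp only
    rw [show 2*q+1-j = N - j from by omega, Nat.choose_symm hjN]
    have hc1 : (((N - j : ℕ)) : ℝ) = (N:ℝ) - (j:ℝ) := by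
      push_cast [Nat.cast_sub hjN]; ring
    rw [hc1]
    rw [Real.cosh_eq]
    rw [show (2*((j:ℝ)) - (N:ℝ)) * x = -((((N:ℝ) - 2*j))*x) from by ring,
      show (2*((N:ℝ) - (j:ℝ)) - (N:ℝ)) * x = (((N:ℝ) - 2*j))*x from by ring]
    ring
  rw [Finset.sum_congr rfl hpair, ← Finset.mul_sum, ← pairSum q G,
    show 2*q+2 = N+1 from by omega, hrhs]
  have h2N : (2:ℝ)^N = 2 * 4^q := by
    rw [hN, pow_succ, pow_mul]
    norm_num
    ring
  rw [h2N]
  generalize ∑ k ∈ range (N+1), G k = S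
  rw [eq_div_iff (by positivity : (2:ℝ) * 4^q ≠ 0)]
  have hinv : (1/(4:ℝ)^q) * (2*4^q) = 2 := by
    field_simp
  linear_combination (S/2) * hinv

end PSLemmas


/-- `c k n` : the coefficient of `x^k` in the Taylor expansion of `x^(2n+1)/sinh^(2n+1) x`
around `0` (the function being extended by its limit `1` at `0`). -/
noncomputable def taylorC (k n : ℕ) : ℝ :=
  iteratedDeriv k
    (fun x : ℝ => if x = 0 then 1 else x ^ (2 * n + 1) / Real.sinh x ^ (2 * n + 1)) 0
    / k.factorial

/-- `Ω q p := 4⁻ᑫ ∑_{k=0}^{q} C(2q+1,k) (2q+1-2k)^(2p)`. -/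
noncomputable def Omega (q p : ℕ) : ℝ :=
  (1 / 4 ^ q) * ∑ k ∈ Finset.range (q + 1),
    ((2 * q + 1).choose k : ℝ) * ((2 * q + 1 : ℝ) - 2 * k) ^ (2 * p)

lemma hginvx {x : ℝ} (hx : x ≠ 0) : (gfun x)⁻¹ = x / Real.sinh x := by
  rw [gfun, if_neg hx, inv_div]

lemma sinh_ne {x : ℝ} (hx : x ≠ 0) : Real.sinh x ≠ 0 := by
  simpa [Real.sinh_eq_zero] using hx

lemma decomp (q n : ℕ) (hqn : q < n) (x : ℝ) :
    ((gfun x)⁻¹)^(2*n+1) * Real.cosh x ^ (2*q+1)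
      = ∑ j ∈ range (q+1), (q.choose j : ℝ) *
        (x^(2*j) * (Real.cosh x * ((gfun x)⁻¹)^(2*(n-j)+1))) := by
  rcases eq_or_ne x 0 with rfl | hx
  · rw [Finset.sum_eq_single_of_mem 0 (Finset.mem_range.mpr (Nat.succ_pos q))]
    · simp [gfun_zero]
    · intro j _ hj
      have : (0:ℝ) ^ (2*j) = 0 := by
        apply zero_pow
        omega
      simp [this]
  · have hS := sinh_ne hx
    rw [hginvx hx]
    have hc : Real.cosh x ^ (2*q+1) = Real.cosh x * (Real.sinh x^2 + 1)^q := by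
      rw [show 2*q+1 = 2*q+1 from rfl, pow_succ, pow_mul, Real.cosh_sq]
      ring
    rw [hc, add_pow, Finset.mul_sum, Finset.mul_sum]
    refine Finset.sum_congr rfl fun j hj => ?_
    have hjq : j ≤ q := Nat.lt_succ_iff.mp (Finset.mem_range.mp hj)
    have hpow : (x/Real.sinh x)^(2*n+1) * (Real.sinh x^2)^j
        = x^(2*j) * (x/Real.sinh x)^(2*(n-j)+1) := by
      rw [div_pow, div_pow, ← pow_mul,
        show 2*n+1 = (2*(n-j)+1) + 2*j from by omega, pow_add, pow_add]
      field_simp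
      ring
    calc (x/Real.sinh x)^(2*n+1) * (Real.cosh x * ((Real.sinh x^2)^j * 1^(q-j) * (q.choose j : ℝ)))
        = (Real.cosh x * (q.choose j : ℝ)) * ((x/Real.sinh x)^(2*n+1) * (Real.sinh x^2)^j) := by
          rw [one_pow]; ring
      _ = (Real.cosh x * (q.choose j : ℝ)) * (x^(2*j) * (x/Real.sinh x)^(2*(n-j)+1)) := by
          rw [hpow]
      _ = (q.choose j : ℝ) * (x^(2*j) * (Real.cosh x * (x/Real.sinh x)^(2*(n-j)+1))) := by
          ring

theorem stmt_7 (q n : ℕ) (hqn : q < n) :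
    ∑ m ∈ Finset.range (n + 1),
      taylorC (2 * n - 2 * m) n / ((2 * m).factorial : ℝ) * Omega q m = 0 := by
  classical
  -- the function f and its series
  have hgA := PS_gfun.analyticAt
  have hg1 : gfun 0 ≠ 0 := by rw [gfun_zero]; norm_num
  have hginvA : AnalyticAt ℝ (fun x => (gfun x)⁻¹) 0 := hgA.inv hg1
  obtain ⟨cf, hf⟩ := PS_of_analyticAt (hginvA.pow (2*n+1) :
    AnalyticAt ℝ (fun x => ((gfun x)⁻¹) ^ (2*n+1)) 0)
  -- the function h and its series
  set ch : ℕ → ℝ := fun k => (1/4^q : ℝ) * ∑ j ∈ range (q+1), ((2*q+1).choose j : ℝ) *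
      (if Even k then ((((2*q+1:ℕ)):ℝ) - 2*j) ^ k / k.factorial else 0) with hch
  have hh : PS (fun x => (1/4^q : ℝ) * ∑ j ∈ range (q+1), ((2*q+1).choose j : ℝ) *
      Real.cosh ((((2*q+1:ℕ):ℝ) - 2*j) * x)) ch := by
    refine PS.const_mul ?_ _
    exact PS.finsum (range (q+1)) _ _ fun j _ =>
      (PS_cosh ((((2*q+1:ℕ)):ℝ) - 2*j)).const_mul _
  -- rewrite h as cosh ^ (2q+1)
  have hh' : PS (fun x => Real.cosh x ^ (2*q+1)) ch := by
    refine hh.congr ?_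
    filter_upwards with x
    exact (cosh_pow_eq q x).symm
  -- product series
  have hprod := hf.mul hh'
  -- the decomposition series
  have hcoshA : AnalyticAt ℝ Real.cosh 0 := by
    have := (PS_cosh 1).congr (by filter_upwards with x; rw [one_mul] :
      (Real.cosh : ℝ → ℝ) =ᶠ[nhds 0] fun x => Real.cosh (1 * x))
    exact this.analyticAt
  have hexists : ∀ j : ℕ, ∃ cu, PS (fun x => Real.cosh x * ((gfun x)⁻¹) ^ (2*(n-j)+1)) cu :=
    fun j => PS_of_analyticAt (hcoshA.mul (hginvA.pow _))
  choose cu hcu using hexists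
  have hcu0 : ∀ j ≤ q, cu j (2*(n-j)) = 0 := by
    intro j hj
    have hnj : 1 ≤ n - j := by omega
    have h1 : 2*(n-j)+1 = 2*(n-j-1)+3 := by omega
    have h2 : 2*(n-j) = 2*(n-j-1)+2 := by omega
    rw [h2]
    refine keyA (n-j-1) ?_
    rw [← h1]
    exact hcu j
  -- series for the decomposition sum
  have hdec : PS (fun x => ∑ j ∈ range (q+1), (q.choose j : ℝ) *
      (x^(2*j) * (Real.cosh x * ((gfun x)⁻¹)^(2*(n-j)+1))))
      (fun k => ∑ j ∈ range (q+1), (q.choose j : ℝ) *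
        (∑ i ∈ range (k+1), (if i = 2*j then (1:ℝ) else 0) * cu j (k - i))) := by
    refine PS.finsum _ _ _ fun j _ => ?_
    exact ((PS_pow (2*j)).mul (hcu j)).const_mul _
  -- equate the two series for the product
  have hfun : (fun x => ((gfun x)⁻¹)^(2*n+1) * Real.cosh x ^ (2*q+1))
      = fun x => ∑ j ∈ range (q+1), (q.choose j : ℝ) *
        (x^(2*j) * (Real.cosh x * ((gfun x)⁻¹)^(2*(n-j)+1))) := by
    funext x
    exact decomp q n hqn x
  have hprod : PS (fun x => ((gfun x)⁻¹)^(2*n+1) * Real.cosh x ^ (2*q+1)) _ := hprod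
  rw [hfun] at hprod
  have huniq := PS.unique hprod hdec
  -- evaluate coefficient at 2n
  have hzero : ∑ k ∈ range (2*n+1), cf k * ch (2*n - k) = 0 := by
    have := congrFun huniq (2*n)
    rw [this]
    refine Finset.sum_eq_zero fun j hj => ?_
    have hjq : j ≤ q := Nat.lt_succ_iff.mp (Finset.mem_range.mp hj)
    have h2j : 2*j ∈ range (2*n+1) := Finset.mem_range.mpr (by omega)
    rw [Finset.sum_eq_single_of_mem (2*j) h2j]
    · rw [if_pos rfl, one_mul, show 2*n - 2*j = 2*(n-j) from by omega, hcu0 j hjq,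
        mul_zero]
    · intro i _ hi
      simp [hi]
  -- translate the goal
  have htay : ∀ k, taylorC k n = cf k := by
    intro k
    have hfeq : (fun x : ℝ => if x = 0 then 1 else x ^ (2*n+1) / Real.sinh x ^ (2*n+1))
        = fun x => ((gfun x)⁻¹) ^ (2*n+1) := by
      funext x
      rcases eq_or_ne x 0 with rfl | hx
      · simp [gfun_zero]
      · rw [if_neg hx, hginvx hx, div_pow]
    rw [taylorC, hfeq, PS.iteratedDeriv_eq (f := fun x => ((gfun x)⁻¹) ^ (2*n+1)) hf k]
    have : (k.factorial : ℝ) ≠ 0 := Nat.cast_ne_zero.mpr k.factorial_ne_zero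
    field_simp
  have hch2m : ∀ m, ch (2*m) = Omega q m / ((2*m).factorial : ℝ) := by
    intro m
    have hcast : ∀ j : ℕ, ((((2*q+1:ℕ)):ℝ) - 2*j) = ((2*q+1 : ℝ) - 2*j) := by
      intro j; push_cast; ring
    calc ch (2*m) = (1/4^q) * ∑ j ∈ range (q+1), ((2*q+1).choose j : ℝ) *
          (((2*q+1:ℝ) - 2*j)^(2*m) / ((2*m).factorial : ℝ)) := by
          rw [hch]
          simp only [if_pos (even_two_mul m)]
          exact congrArg _ (Finset.sum_congr rfl fun j _ => by rw [hcast j])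
      _ = ((1/4^q) * ∑ j ∈ range (q+1), ((2*q+1).choose j : ℝ) *
            ((2*q+1:ℝ) - 2*j)^(2*m)) / ((2*m).factorial : ℝ) := by
          rw [mul_div_assoc]
          congr 1
          rw [Finset.sum_div]
          exact Finset.sum_congr rfl fun j _ => (mul_div_assoc _ _ _).symm
      _ = Omega q m / ((2*m).factorial : ℝ) := by rw [Omega]
  have hchodd : ∀ k, ¬ Even k → ch k = 0 := by
    intro k hk
    rw [hch]
    simp [hk]
  -- reflected version of hzero
  have h1 := Finset.sum_range_reflect (fun k => cf k * ch (2*n - k)) (2*n+1)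
  have hzero' : ∑ k ∈ range (2*n+1), cf (2*n - k) * ch k = 0 := by
    rw [← hzero, ← h1]
    refine Finset.sum_congr rfl fun j hj => ?_
    have hj' : j ≤ 2*n := Nat.lt_succ_iff.mp (Finset.mem_range.mp hj)
    rw [show 2*n+1-1-j = 2*n-j from by omega, show 2*n - (2*n-j) = j from by omega]
  -- restrict to even indices
  have himg : (range (n+1)).image (fun m => 2*m) ⊆ range (2*n+1) := by
    intro k hk
    obtain ⟨m, hm, rfl⟩ := Finset.mem_image.mp hk
    exact Finset.mem_range.mpr (by have := Finset.mem_range.mp hm; omega)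
  have hvanish : ∀ k ∈ range (2*n+1), k ∉ (range (n+1)).image (fun m => 2*m) →
      cf (2*n - k) * ch k = 0 := by
    intro k hk hk'
    have hke : ¬ Even k := by
      rintro ⟨m, hm⟩
      refine hk' (Finset.mem_image.mpr ⟨m, ?_, by omega⟩)
      have := Finset.mem_range.mp hk
      exact Finset.mem_range.mpr (by omega)
    rw [hchodd k hke, mul_zero]
  have hinj : ∀ x ∈ range (n+1), ∀ y ∈ range (n+1),
      (fun m => 2*m) x = (fun m => 2*m) y → x = y := by
    intro x _ y _ h
    dsimp at h; omega
  have himgsum : ∑ k ∈ (range (n+1)).image (fun m => 2*m), (cf (2*n - k) * ch k)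
      = ∑ m ∈ range (n+1), cf (2*n - 2*m) * ch (2*m) := Finset.sum_image hinj
  have hfinal : ∑ m ∈ range (n+1), cf (2*n - 2*m) * ch (2*m) = 0 := by
    rw [← himgsum, Finset.sum_subset himg hvanish]
    exact hzero'
  -- conclude
  rw [Finset.sum_congr rfl fun m (_ : m ∈ range (n+1)) => ?_]
  · exact hfinal
  · rw [htay, hch2m]
    ring
end

section
/- For natural numbers q, n with 0 < 2q < n, the convergent integral ∫₀^∞ sinh^{2q}(z)/(z · cosh^n(z)) dz equals -2q ∫₀^∞ ln(z) · sinh^{2q-1}(z)/cosh^{n-1}(z) dz + n ∫₀^∞ ln(z) · sinh^{2q+1}(z)/cosh^{n+1}(z) dz. -/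
open Real MeasureTheory Set Filter Topology

namespace Stmt18

lemma sinh_le_cosh' (z : ℝ) : Real.sinh z ≤ Real.cosh z := by
  nlinarith [Real.cosh_sub_sinh z, Real.exp_pos (-z)]

lemma inv_cosh_le (z : ℝ) : (Real.cosh z)⁻¹ ≤ 2 * Real.exp (-z) := by
  have h1 : Real.exp z / 2 ≤ Real.cosh z := by
    rw [Real.cosh_eq]; nlinarith [Real.exp_pos (-z)]
  have h2 : (0:ℝ) < Real.exp z / 2 := by positivity
  calc (Real.cosh z)⁻¹ ≤ (Real.exp z / 2)⁻¹ := by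
        exact inv_anti₀ h2 h1
    _ = 2 * Real.exp (-z) := by rw [Real.exp_neg]; field_simp

lemma sinh_le_mul_cosh {z : ℝ} (hz : 0 ≤ z) : Real.sinh z ≤ z * Real.cosh z := by
  have key : ∀ x : ℝ, HasDerivAt (fun t => t * Real.cosh t - Real.sinh t)
      (x * Real.sinh x) x := by
    intro x
    have h := ((hasDerivAt_id x).mul (Real.hasDerivAt_cosh x)).sub (Real.hasDerivAt_sinh x)
    refine h.congr_deriv ?_; simp [mul_comm]
  have hmono : MonotoneOn (fun t => t * Real.cosh t - Real.sinh t) (Ici 0) := by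
    apply monotoneOn_of_deriv_nonneg (convex_Ici 0)
    · exact Continuous.continuousOn (by continuity)
    · intro x hx
      exact (key x).differentiableAt.differentiableWithinAt
    · intro x hx
      rw [(key x).deriv]
      rw [interior_Ici] at hx
      exact mul_nonneg hx.le (by simpa [Real.sinh_nonneg_iff] using hx.le)
  have := hmono self_mem_Ici hz hz
  simpa using this

lemma ratio_le {z : ℝ} (hz : 0 ≤ z) {j k : ℕ} (hj : 1 ≤ j) (hjk : j < k) :
    Real.sinh z ^ j / Real.cosh z ^ k ≤ Real.sinh z / Real.cosh z ^ 2 := by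
  obtain ⟨i, rfl⟩ : ∃ i, j = i + 1 := ⟨j - 1, by omega⟩
  have hc := Real.cosh_pos (x := z)
  have hs : 0 ≤ Real.sinh z := Real.sinh_nonneg_iff.2 hz
  rw [div_le_div_iff₀ (by positivity) (by positivity)]
  calc Real.sinh z ^ (i + 1) * Real.cosh z ^ 2
      = Real.sinh z * (Real.sinh z ^ i * Real.cosh z ^ 2) := by ring
    _ ≤ Real.sinh z * (Real.cosh z ^ i * Real.cosh z ^ 2) := by
        gcongr
        exact sinh_le_cosh' z
    _ = Real.sinh z * Real.cosh z ^ (i + 2) := by ring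
    _ ≤ Real.sinh z * Real.cosh z ^ k := by
        gcongr
        · exact Real.one_le_cosh z
        · omega

lemma base_le {z : ℝ} (hz : 0 ≤ z) : Real.sinh z / Real.cosh z ^ 2 ≤ 2 * Real.exp (-z) := by
  have hc := Real.cosh_pos (x := z)
  calc Real.sinh z / Real.cosh z ^ 2 ≤ Real.cosh z / Real.cosh z ^ 2 := by
        gcongr; exact sinh_le_cosh' z
    _ = (Real.cosh z)⁻¹ := by field_simp
    _ ≤ 2 * Real.exp (-z) := inv_cosh_le z

lemma log_ratio_le {z : ℝ} (hz : 0 < z) :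
    |Real.log z| * (Real.sinh z / Real.cosh z ^ 2) ≤ (1 + z) * (2 * Real.exp (-z)) := by
  have hc := Real.cosh_pos (x := z)
  have hs : 0 ≤ Real.sinh z := Real.sinh_nonneg_iff.2 hz.le
  rcases le_or_gt z 1 with h1 | h1
  · have hlog : |Real.log z| ≤ 1 / z := by
      rw [abs_of_nonpos (Real.log_nonpos hz.le h1)]
      have := Real.log_le_sub_one_of_pos (x := 1 / z) (by positivity)
      rw [Real.log_div one_ne_zero hz.ne', Real.log_one] at this
      linarith
    have hrat : Real.sinh z / Real.cosh z ^ 2 ≤ z / Real.cosh z := by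
      rw [div_le_div_iff₀ (by positivity) hc]
      calc Real.sinh z * Real.cosh z ≤ (z * Real.cosh z) * Real.cosh z := by
            gcongr; exact sinh_le_mul_cosh hz.le
        _ = z * Real.cosh z ^ 2 := by ring
    calc |Real.log z| * (Real.sinh z / Real.cosh z ^ 2)
        ≤ (1 / z) * (z / Real.cosh z) := by
          apply mul_le_mul hlog hrat (by positivity) (by positivity)
      _ = (Real.cosh z)⁻¹ := by field_simp
      _ ≤ 2 * Real.exp (-z) := inv_cosh_le z
      _ ≤ (1 + z) * (2 * Real.exp (-z)) := by nlinarith [Real.exp_pos (-z)]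
  · have hlog : |Real.log z| ≤ 1 + z := by
      rw [abs_of_nonneg (Real.log_nonneg h1.le)]
      have := Real.log_le_sub_one_of_pos hz
      linarith
    exact mul_le_mul hlog (base_le hz.le) (by positivity) (by positivity)

lemma g_integrable : IntegrableOn (fun z : ℝ => 2 * (1 + z) * Real.exp (-z)) (Ioi 0) := by
  have h1 : IntegrableOn (fun z : ℝ => Real.exp (-z)) (Ioi (0:ℝ)) := by
    have := exp_neg_integrableOn_Ioi (0:ℝ) (b := 1) one_pos
    simpa using this
  have h2 : IntegrableOn (fun z : ℝ => z * Real.exp (-z)) (Ioi (0:ℝ)) := by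
    have h := integrableOn_rpow_mul_exp_neg_rpow (s := 1) (p := 1) (by norm_num) one_pos
    apply h.congr_fun ?_ measurableSet_Ioi
    intro x hx
    simp [Real.rpow_one]
  have h3 : IntegrableOn (fun z : ℝ => 2 * (Real.exp (-z) + z * Real.exp (-z))) (Ioi (0:ℝ)) :=
    (h1.add h2).const_mul 2
  apply h3.congr_fun ?_ measurableSet_Ioi
  intro x _
  ring

lemma integ_of_bound {f : ℝ → ℝ} (hf : ContinuousOn f (Ioi 0))
    (hb : ∀ z ∈ Ioi (0:ℝ), ‖f z‖ ≤ 2 * (1 + z) * Real.exp (-z)) :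
    IntegrableOn f (Ioi 0) :=
  Integrable.mono' g_integrable (hf.aestronglyMeasurable measurableSet_Ioi)
    ((ae_restrict_iff' measurableSet_Ioi).2 (Eventually.of_forall hb))

lemma cont_log_mul_ratio (a b : ℕ) :
    ContinuousOn (fun z : ℝ => Real.log z * Real.sinh z ^ a / Real.cosh z ^ b) (Ioi 0) := by
  apply ContinuousOn.div
  · exact (Real.continuousOn_log.mono (fun z hz => by
      simpa using (ne_of_gt (mem_Ioi.1 hz)))).mul
      (Continuous.continuousOn (by continuity))
  · exact Continuous.continuousOn (by continuity)
  · intro z _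
    exact pow_ne_zero _ (Real.cosh_pos (x := z)).ne'

lemma I2_integrable {a b : ℕ} (ha : 1 ≤ a) (hab : a < b) :
    IntegrableOn (fun z : ℝ => Real.log z * Real.sinh z ^ a / Real.cosh z ^ b) (Ioi 0) := by
  apply integ_of_bound (cont_log_mul_ratio a b)
  intro z hz
  have hz : (0:ℝ) < z := mem_Ioi.1 hz
  have hc := Real.cosh_pos (x := z)
  have hs : 0 ≤ Real.sinh z := Real.sinh_nonneg_iff.2 hz.le
  rw [Real.norm_eq_abs, mul_div_assoc, abs_mul,
    abs_of_nonneg (by positivity : (0:ℝ) ≤ Real.sinh z ^ a / Real.cosh z ^ b)]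
  calc |Real.log z| * (Real.sinh z ^ a / Real.cosh z ^ b)
      ≤ |Real.log z| * (Real.sinh z / Real.cosh z ^ 2) :=
        mul_le_mul_of_nonneg_left (ratio_le hz.le ha hab) (abs_nonneg _)
    _ ≤ (1 + z) * (2 * Real.exp (-z)) := log_ratio_le hz
    _ = 2 * (1 + z) * Real.exp (-z) := by ring

lemma I1_integrable {a b : ℕ} (ha : 1 ≤ a) (hab : a < b) :
    IntegrableOn (fun z : ℝ => Real.sinh z ^ (a+1) / (z * Real.cosh z ^ (b+1))) (Ioi 0) := by
  apply integ_of_bound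
  · apply ContinuousOn.div (Continuous.continuousOn (by continuity))
      ((continuousOn_id).mul (Continuous.continuousOn (by continuity)))
    intro z hz
    have hz : (0:ℝ) < z := mem_Ioi.1 hz
    have hc := Real.cosh_pos (x := z)
    show z * Real.cosh z ^ (b+1) ≠ 0
    positivity
  · intro z hz
    have hz : (0:ℝ) < z := mem_Ioi.1 hz
    have hc := Real.cosh_pos (x := z)
    have hs : 0 ≤ Real.sinh z := Real.sinh_nonneg_iff.2 hz.le
    rw [Real.norm_eq_abs, abs_of_nonneg (by positivity)]
    have step1 : Real.sinh z ^ (a+1) / (z * Real.cosh z ^ (b+1))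
        ≤ Real.sinh z ^ a / Real.cosh z ^ b := by
      rw [div_le_div_iff₀ (by positivity) (by positivity)]
      calc Real.sinh z ^ (a+1) * Real.cosh z ^ b
          = Real.sinh z * (Real.sinh z ^ a * Real.cosh z ^ b) := by ring
        _ ≤ (z * Real.cosh z) * (Real.sinh z ^ a * Real.cosh z ^ b) := by
            gcongr
            exact sinh_le_mul_cosh hz.le
        _ = Real.sinh z ^ a * (z * Real.cosh z ^ (b+1)) := by ring
    calc Real.sinh z ^ (a+1) / (z * Real.cosh z ^ (b+1))
        ≤ Real.sinh z ^ a / Real.cosh z ^ b := step1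
      _ ≤ Real.sinh z / Real.cosh z ^ 2 := ratio_le hz.le ha hab
      _ ≤ 2 * Real.exp (-z) := base_le hz.le
      _ ≤ 2 * (1 + z) * Real.exp (-z) := by nlinarith [Real.exp_pos (-z)]

lemma hasDerivF (a b : ℕ) {z : ℝ} (hz : 0 < z) :
    HasDerivAt (fun z => Real.log z * Real.sinh z ^ (a+1) / Real.cosh z ^ (b+1))
      (Real.sinh z ^ (a+1) / (z * Real.cosh z ^ (b+1))
        + (((a:ℝ)+1) * (Real.log z * Real.sinh z ^ a / Real.cosh z ^ b)
           - ((b:ℝ)+1) * (Real.log z * Real.sinh z ^ (a+2) / Real.cosh z ^ (b+2)))) z := by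
  have hc : Real.cosh z ≠ 0 := (Real.cosh_pos (x := z)).ne'
  have h1 : HasDerivAt (fun z : ℝ => Real.sinh z ^ (a+1))
      ((a+1 : ℝ) * Real.sinh z ^ a * Real.cosh z) z := by
    have := (Real.hasDerivAt_sinh z).fun_pow (a+1)
    simpa using this
  have h2 : HasDerivAt (fun z : ℝ => Real.cosh z ^ (b+1))
      ((b+1 : ℝ) * Real.cosh z ^ b * Real.sinh z) z := by
    have := (Real.hasDerivAt_cosh z).fun_pow (b+1)
    simpa using this
  have h3 : HasDerivAt Real.log z⁻¹ z := Real.hasDerivAt_log hz.ne'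
  have h4 := ((h3.fun_mul h1).fun_div h2 (pow_ne_zero _ hc))
  refine h4.congr_deriv ?_
  have e1 : Real.sinh z ^ (a+2) = Real.sinh z ^ (a+1) * Real.sinh z := by ring
  have e2 : Real.sinh z ^ (a+1) = Real.sinh z ^ a * Real.sinh z := by ring
  field_simp
  ring

lemma tendsto_F_atTop (a b : ℕ) (hab : a < b) :
    Tendsto (fun z => Real.log z * Real.sinh z ^ (a+1) / Real.cosh z ^ (b+1))
      atTop (𝓝 0) := by
  apply squeeze_zero_norm' (a := fun z => 2 * (z * Real.exp (-z)))
  · filter_upwards [eventually_ge_atTop (1:ℝ)] with z hz1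
    have hz : (0:ℝ) < z := lt_of_lt_of_le one_pos hz1
    have hc := Real.cosh_pos (x := z)
    have hs : 0 ≤ Real.sinh z := Real.sinh_nonneg_iff.2 hz.le
    rw [Real.norm_eq_abs, mul_div_assoc, abs_mul,
      abs_of_nonneg (by positivity : (0:ℝ) ≤ Real.sinh z ^ (a+1) / Real.cosh z ^ (b+1))]
    have hlog : |Real.log z| ≤ z := by
      rw [abs_of_nonneg (Real.log_nonneg hz1)]
      linarith [Real.log_le_sub_one_of_pos hz]
    calc |Real.log z| * (Real.sinh z ^ (a+1) / Real.cosh z ^ (b+1))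
        ≤ z * (2 * Real.exp (-z)) := by
          apply mul_le_mul hlog ?_ (by positivity) hz.le
          exact le_trans (ratio_le hz.le (by omega) (by omega)) (base_le hz.le)
      _ = 2 * (z * Real.exp (-z)) := by ring
  · have h := tendsto_pow_mul_exp_neg_atTop_nhds_zero 1
    have h2 := h.const_mul (2:ℝ)
    simpa using h2

lemma tendsto_F_nhds0 (a b : ℕ) (hab : a ≤ b) :
    Tendsto (fun z => Real.log z * Real.sinh z ^ (a+1) / Real.cosh z ^ (b+1))
      (𝓝[>] (0:ℝ)) (𝓝 0) := by
  apply squeeze_zero_norm' (a := fun z => ‖Real.log z * z ^ (1:ℝ)‖)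
  · filter_upwards [Ioo_mem_nhdsGT (one_pos : (0:ℝ) < 1)] with z hz
    obtain ⟨hz0, hz1⟩ := hz
    have hc := Real.cosh_pos (x := z)
    have hs : 0 ≤ Real.sinh z := Real.sinh_nonneg_iff.2 hz0.le
    have hrat : Real.sinh z ^ (a+1) / Real.cosh z ^ (b+1) ≤ z := by
      rw [div_le_iff₀ (by positivity)]
      calc Real.sinh z ^ (a+1) ≤ (z * Real.cosh z) ^ (a+1) := by
            gcongr
            exact sinh_le_mul_cosh hz0.le
        _ = z ^ (a+1) * Real.cosh z ^ (a+1) := by ring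
        _ ≤ z * Real.cosh z ^ (b+1) := by
            apply mul_le_mul ?_ ?_ (by positivity) hz0.le
            · exact pow_le_of_le_one hz0.le hz1.le (by omega)
            · exact pow_le_pow_right₀ (Real.one_le_cosh z) (by omega)
    rw [Real.norm_eq_abs, Real.rpow_one, Real.norm_eq_abs, abs_mul,
      abs_of_pos hz0, mul_div_assoc, abs_mul,
      abs_of_nonneg (by positivity : (0:ℝ) ≤ Real.sinh z ^ (a+1) / Real.cosh z ^ (b+1))]
    exact mul_le_mul_of_nonneg_left hrat (abs_nonneg _)
  · simpa using (tendsto_log_mul_rpow_nhdsGT_zero one_pos).norm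

end Stmt18

theorem stmt_18 (q n : ℕ) (hq : 0 < 2 * q) (hn : 2 * q < n) :
    (∫ z in Set.Ioi (0 : ℝ), Real.sinh z ^ (2 * q) / (z * Real.cosh z ^ n))
      = -(2 * q : ℝ) *
          (∫ z in Set.Ioi (0 : ℝ), Real.log z * Real.sinh z ^ (2 * q - 1) / Real.cosh z ^ (n - 1))
        + (n : ℝ) *
          (∫ z in Set.Ioi (0 : ℝ), Real.log z * Real.sinh z ^ (2 * q + 1) / Real.cosh z ^ (n + 1)) := by
  obtain ⟨a, h2q⟩ : ∃ a, 2 * q = a + 1 := ⟨2 * q - 1, by omega⟩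
  obtain ⟨b, hnb⟩ : ∃ b, n = b + 1 := ⟨n - 1, by omega⟩
  have ha : 1 ≤ a := by omega
  have hab : a < b := by omega
  have e1 : 2 * q - 1 = a := by omega
  have e2 : n - 1 = b := by omega
  have e3 : (2 : ℝ) * (q : ℝ) = (a : ℝ) + 1 := by exact_mod_cast h2q
  rw [e1, e2, h2q, hnb, e3]
  simp only [show a + 1 + 1 = a + 2 from by omega, show b + 1 + 1 = b + 2 from by omega]
  -- integrability facts
  have I1 := Stmt18.I1_integrable ha hab
  have I2 := Stmt18.I2_integrable ha hab
  have I3 := Stmt18.I2_integrable (a := a + 2) (b := b + 2) (by omega) (by omega)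
  have I2c := I2.const_mul ((a : ℝ) + 1)
  have I3c := I3.const_mul ((b : ℝ) + 1)
  -- FTC
  have hcont : ContinuousWithinAt
      (fun z => Real.log z * Real.sinh z ^ (a + 1) / Real.cosh z ^ (b + 1)) (Ici (0:ℝ)) 0 := by
    rw [← continuousWithinAt_Ioi_iff_Ici]
    show Tendsto _ (𝓝[Set.Ioi 0] 0) (𝓝 _)
    convert Stmt18.tendsto_F_nhds0 a b hab.le using 2
    simp
  have hFTC := integral_Ioi_of_hasDerivAt_of_tendsto
    (f := fun z => Real.log z * Real.sinh z ^ (a + 1) / Real.cosh z ^ (b + 1))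
    (f' := fun z => Real.sinh z ^ (a+1) / (z * Real.cosh z ^ (b+1))
        + (((a:ℝ)+1) * (Real.log z * Real.sinh z ^ a / Real.cosh z ^ b)
           - ((b:ℝ)+1) * (Real.log z * Real.sinh z ^ (a+2) / Real.cosh z ^ (b+2))))
    hcont (fun x hx => Stmt18.hasDerivF a b (mem_Ioi.1 hx))
    (I1.add (I2c.sub I3c)) (Stmt18.tendsto_F_atTop a b hab)
  simp only [Real.log_zero, Real.sinh_zero, zero_pow (by omega : a + 1 ≠ 0), zero_mul,
    mul_zero, zero_div, sub_zero] at hFTC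
  have hsub : Integrable (fun x => ((a:ℝ)+1) * (Real.log x * Real.sinh x ^ a / Real.cosh x ^ b)
      - ((b:ℝ)+1) * (Real.log x * Real.sinh x ^ (a+2) / Real.cosh x ^ (b+2)))
      (volume.restrict (Ioi 0)) := I2c.sub I3c
  have hsub2 : Integrable (fun x => ((a:ℝ)+1) * (Real.log x * Real.sinh x ^ a / Real.cosh x ^ b))
      (volume.restrict (Ioi 0)) := I2c
  have hsub3 : Integrable (fun x => ((b:ℝ)+1) * (Real.log x * Real.sinh x ^ (a+2) / Real.cosh x ^ (b+2)))
      (volume.restrict (Ioi 0)) := I3c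
  rw [integral_add I1 hsub, integral_sub hsub2 hsub3,
    integral_const_mul, integral_const_mul] at hFTC
  push_cast
  linarith
end
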